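/- Let R be the n×n cyclic permutation matrix determined by R·e_i = e_{i+1} on the standard basis e_1,…,e_n of ℂ^n (indices modulo n, so R·e_n = e_1). For every ε ∈ ℂ, the map (A_b)_{b∈ℤ/nℤ} ↦ (R·A_{b−1}·R^{-1})_{b∈ℤ/nℤ} maps C(ε) into itself, is a Lie algebra automorphism of C(ε), and its n-th power is the identity; hence the cyclic group ℤ/nℤ acts on C(ε) by Lie algebra automorphisms. -/

import Mathlib

/-- The diagonal matrix `D_b(ε)` over `ℂ` whose `(b+1,b+1)` entry (1-based), i.e. `(b,b)`
entry (0-based), is `ε` and whose other diagonal entries are `1`. -/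
def Dmat (n : ℕ) (ε : ℂ) (b : Fin n) : Matrix (Fin n) (Fin n) ℂ :=
  Matrix.diagonal (fun i => if i = b then ε else 1)

/-- `C(ε)`: tuples `(A_b)_{b ∈ ℤ/nℤ}` of complex `n×n` matrices with
`A_{b+1} D_b(ε) = D_b(ε) A_b` for all `b`. -/
def Cset (n : ℕ) [NeZero n] (ε : ℂ) : Set (Fin n → Matrix (Fin n) (Fin n) ℂ) :=
  {A | ∀ b : Fin n, A (b + 1) * Dmat n ε b = Dmat n ε b * A b}

/-- The cyclic permutation matrix `R` with `R·e_i = e_{i+1}` (indices modulo `n`):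
its `(i,j)` entry is `1` iff `i = j + 1` in `Fin n` (wraparound). -/
def Rmat (n : ℕ) [NeZero n] : Matrix (Fin n) (Fin n) ℂ :=
  fun i j => if i = j + 1 then 1 else 0

/-- The inverse cyclic permutation matrix, `R⁻¹ = Rᵀ`. -/
def RmatInv (n : ℕ) [NeZero n] : Matrix (Fin n) (Fin n) ℂ :=
  fun i j => if j = i + 1 then 1 else 0

/-- The rotation map `(A_b)_b ↦ (R·A_{b-1}·R⁻¹)_b`. -/
noncomputable def rot (n : ℕ) [NeZero n] (A : Fin n → Matrix (Fin n) (Fin n) ℂ) :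
    Fin n → Matrix (Fin n) (Fin n) ℂ :=
  fun b => Rmat n * A (b - 1) * RmatInv n

lemma RRinv (n : ℕ) [NeZero n] : Rmat n * RmatInv n = 1 := by
  ext i j
  rw [Matrix.mul_apply, Finset.sum_eq_single (i - 1)]
  · simp [Rmat, RmatInv, Matrix.one_apply, eq_comm]
  · intro m _ hm
    have h1 : ¬ i = m + 1 := fun h => hm (eq_sub_iff_add_eq.mpr h.symm)
    simp [Rmat, h1]
  · intro h; exact absurd (Finset.mem_univ _) h

lemma RinvR (n : ℕ) [NeZero n] : RmatInv n * Rmat n = 1 := by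
  ext i j
  rw [Matrix.mul_apply, Finset.sum_eq_single (i + 1)]
  · simp only [RmatInv, Rmat, if_pos rfl, one_mul, Matrix.one_apply]
    by_cases h : i = j
    · simp [h]
    · have : ¬ (i + 1 = j + 1) := fun hh => h (add_right_cancel hh)
      simp [h, this]
  · intro m _ hm
    simp [RmatInv, hm]
  · intro h; exact absurd (Finset.mem_univ _) h

lemma DR (n : ℕ) [NeZero n] (ε : ℂ) (b : Fin n) :
    Dmat n ε b * Rmat n = Rmat n * Dmat n ε (b - 1) := by
  ext i j
  simp only [Dmat, Matrix.diagonal_mul, Matrix.mul_diagonal]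
  by_cases h : i = j + 1
  · subst h
    have : (j + 1 = b) ↔ (j = b - 1) := by
      constructor
      · intro h; exact eq_sub_iff_add_eq.mpr h
      · intro h; exact (eq_sub_iff_add_eq.mp h)
    simp [Rmat, this]
  · simp [Rmat, h]

lemma RinvD (n : ℕ) [NeZero n] (ε : ℂ) (b : Fin n) :
    RmatInv n * Dmat n ε b = Dmat n ε (b - 1) * RmatInv n := by
  calc RmatInv n * Dmat n ε b
      = RmatInv n * Dmat n ε b * (Rmat n * RmatInv n) := by rw [RRinv, mul_one]
    _ = RmatInv n * (Dmat n ε b * Rmat n) * RmatInv n := by simp only [mul_assoc]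
    _ = RmatInv n * (Rmat n * Dmat n ε (b - 1)) * RmatInv n := by rw [DR]
    _ = (RmatInv n * Rmat n) * (Dmat n ε (b - 1) * RmatInv n) := by simp only [mul_assoc]
    _ = Dmat n ε (b - 1) * RmatInv n := by rw [RinvR, one_mul]

open Fin.NatCast in
lemma Rpow (n : ℕ) [NeZero n] (k : ℕ) (i j : Fin n) :
    ((Rmat n) ^ k) i j = if i = j + (k : Fin n) then 1 else 0 := by
  induction k generalizing j with
  | zero => simp [Matrix.one_apply]
  | succ k ih =>
    rw [pow_succ, Matrix.mul_apply, Finset.sum_eq_single (j + 1)]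
    · rw [ih]
      have hcast : j + 1 + (k : Fin n) = j + ((k + 1 : ℕ) : Fin n) := by
        push_cast; abel
      simp [Rmat, hcast]
    · intro m _ hm
      simp [Rmat, hm]
    · intro h; exact absurd (Finset.mem_univ _) h

open Fin.NatCast in
lemma Rn1 (n : ℕ) [NeZero n] : (Rmat n) ^ n = 1 := by
  ext i j
  rw [Rpow]
  simp [Matrix.one_apply, Fin.natCast_self]

lemma RmatInvT (n : ℕ) [NeZero n] : RmatInv n = Matrix.transpose (Rmat n) := by
  ext i j
  simp [Rmat, RmatInv, Matrix.transpose_apply]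

lemma RIn1 (n : ℕ) [NeZero n] : (RmatInv n) ^ n = 1 := by
  rw [RmatInvT, ← Matrix.transpose_pow, Rn1, Matrix.transpose_one]

open Fin.NatCast in
lemma rotpow (n : ℕ) [NeZero n] (k : ℕ) (A : Fin n → Matrix (Fin n) (Fin n) ℂ)
    (b : Fin n) :
    (rot n)^[k] A b = (Rmat n) ^ k * A (b - (k : Fin n)) * (RmatInv n) ^ k := by
  induction k generalizing b with
  | zero => simp
  | succ k ih =>
    rw [Function.iterate_succ_apply']
    show Rmat n * ((rot n)^[k] A (b - 1)) * RmatInv n = _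
    rw [ih]
    have hb : b - 1 - (k : Fin n) = b - ((k + 1 : ℕ) : Fin n) := by
      rw [sub_sub]; push_cast; abel
    rw [hb, pow_succ' (Rmat n), pow_succ (RmatInv n)]
    simp only [mul_assoc]

lemma key (n : ℕ) [NeZero n] (X Y : Matrix (Fin n) (Fin n) ℂ) :
    Rmat n * (X * Y) * RmatInv n
      = (Rmat n * X * RmatInv n) * (Rmat n * Y * RmatInv n) := by
  simp only [mul_assoc]
  rw [← mul_assoc (RmatInv n) (Rmat n), RinvR, one_mul]

open Fin.NatCast in
theorem statement12 (n : ℕ) [NeZero n] (hn : 2 ≤ n) (ε : ℂ) :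
    Rmat n * RmatInv n = 1 ∧ RmatInv n * Rmat n = 1 ∧
    (∀ A ∈ Cset n ε, rot n A ∈ Cset n ε) ∧
    (∀ A B : Fin n → Matrix (Fin n) (Fin n) ℂ, rot n (A + B) = rot n A + rot n B) ∧
    (∀ (c : ℂ) (A : Fin n → Matrix (Fin n) (Fin n) ℂ), rot n (c • A) = c • rot n A) ∧
    (∀ A B : Fin n → Matrix (Fin n) (Fin n) ℂ,
      rot n (fun b => A b * B b - B b * A b)
        = fun b => rot n A b * rot n B b - rot n B b * rot n A b) ∧
    (∀ A : Fin n → Matrix (Fin n) (Fin n) ℂ, (rot n)^[n] A = A) := by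
  refine ⟨RRinv n, RinvR n, ?_, ?_, ?_, ?_, ?_⟩
  · intro A hA b
    simp only [rot, add_sub_cancel_right]
    calc Rmat n * A b * RmatInv n * Dmat n ε b
        = Rmat n * A b * (RmatInv n * Dmat n ε b) := by simp only [mul_assoc]
      _ = Rmat n * A b * (Dmat n ε (b - 1) * RmatInv n) := by rw [RinvD]
      _ = Rmat n * (A b * Dmat n ε (b - 1)) * RmatInv n := by simp only [mul_assoc]
      _ = Rmat n * (Dmat n ε (b - 1) * A (b - 1)) * RmatInv n := by
          have h := hA (b - 1)
          rw [sub_add_cancel] at h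
          rw [h]
      _ = (Rmat n * Dmat n ε (b - 1)) * (A (b - 1) * RmatInv n) := by simp only [mul_assoc]
      _ = (Dmat n ε b * Rmat n) * (A (b - 1) * RmatInv n) := by rw [← DR]
      _ = Dmat n ε b * (Rmat n * A (b - 1) * RmatInv n) := by simp only [mul_assoc]
  · intro A B
    funext b
    simp [rot, mul_add, add_mul]
  · intro c A
    funext b
    simp [rot, smul_mul_assoc, mul_smul_comm]
  · intro A B
    funext b
    simp only [rot, mul_sub, sub_mul, key]
  · intro A
    funext b
    rw [rotpow]
    simp [Rn1, RIn1, Fin.natCast_self]
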